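/- Let R be a proto-ranking on a finite set X and x,y,z alternatives such that the only pair among {x,y,z}² possibly related by R is (x,z) (i.e., {x,y,z}² ∩ R ⊆ {(x,z)}). Then there exists a ranking R' containing R ∪ {(x,z),(z,y)} such that the R'-order interval [x,y]_{R'} equals [x,z]_R ∪ {y}. -/

import Mathlib

variable {X : Type*}

def Tournament (W : X → X → Prop) : Prop :=
  (∀ x y : X, x ≠ y → W x y ∨ W y x) ∧ (∀ x y : X, W x y → ¬ W y x)

def Ranking (R : X → X → Prop) : Prop :=
  (∀ x : X, ¬ R x x) ∧ (∀ x y z : X, R x y → R y z → R x z) ∧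
    (∀ x y : X, x ≠ y → R x y ∨ R y x)

def ProtoRanking (R : X → X → Prop) : Prop :=
  (∀ x : X, ¬ R x x) ∧ (∀ x y z : X, R x y → R y z → R x z)

def Adjacent (R : X → X → Prop) (x y : X) : Prop :=
  R x y ∧ ¬ ∃ z : X, R x z ∧ R z y

def Feasible (W R : X → X → Prop) : Prop :=
  ∀ x y : X, Adjacent R x y → W x y

def Efficient (succ W R : X → X → Prop) : Prop :=
  ∀ x y : X, succ x y → W x y → R x y

def MoreAligned (succ R R' : X → X → Prop) : Prop :=
  ∀ x y : X, succ x y → R' x y → R x y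

def OrdInterval (Q : X → X → Prop) (a b : X) : Set X :=
  {c : X | c = a ∨ c = b ∨ (Q a c ∧ Q c b)}

open Classical in
/-- Class assignment: 0 = below x, 1 = x, 2 = strictly between x and z,
3 = z, 4 = y, 5 = above. -/
noncomputable def cls9 (R : X → X → Prop) (x y z c : X) : ℕ :=
  if c = x then 1 else if c = y then 4 else if c = z then 3
  else if R x c ∧ R c z then 2 else if (R x c ∨ R y c ∨ R z c) then 5 else 0

lemma cls9_eq_one {R : X → X → Prop} {x y z c : X} (hc : cls9 R x y z c = 1) : c = x := by
  unfold cls9 at hc; split_ifs at hc <;> first | omega | assumption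

lemma cls9_eq_four {R : X → X → Prop} {x y z c : X} (hc : cls9 R x y z c = 4) : c = y := by
  unfold cls9 at hc; split_ifs at hc <;> first | omega | assumption

lemma cls9_eq_three {R : X → X → Prop} {x y z c : X} (hc : cls9 R x y z c = 3) : c = z := by
  unfold cls9 at hc; split_ifs at hc <;> first | omega | assumption

lemma cls9_eq_two {R : X → X → Prop} {x y z c : X} (hc : cls9 R x y z c = 2) :
    R x c ∧ R c z := by
  unfold cls9 at hc; split_ifs at hc <;> first | omega | assumption

lemma cls9_x (R : X → X → Prop) (x y z : X) : cls9 R x y z x = 1 := by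
  unfold cls9; simp

lemma cls9_y (R : X → X → Prop) {x y : X} (z : X) (hyx : y ≠ x) :
    cls9 R x y z y = 4 := by
  unfold cls9; simp [hyx]

lemma cls9_z (R : X → X → Prop) {x y z : X} (hzx : z ≠ x) (hzy : z ≠ y) :
    cls9 R x y z z = 3 := by
  unfold cls9; simp [hzx, hzy]

lemma cls9_mid (R : X → X → Prop) {x y z c : X} (h1 : c ≠ x) (h2 : c ≠ y) (h3 : c ≠ z)
    (hM : R x c ∧ R c z) : cls9 R x y z c = 2 := by
  unfold cls9; simp [h1, h2, h3, hM]

lemma cls9_hi (R : X → X → Prop) {x y z c : X} (h1 : c ≠ x) (h2 : c ≠ y) (h3 : c ≠ z)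
    (hM : ¬ (R x c ∧ R c z)) (hH : R x c ∨ R y c ∨ R z c) : cls9 R x y z c = 5 := by
  unfold cls9; simp [h1, h2, h3, hM, hH]

/-- Extension placing y immediately below z, without enlarging the interval from x to z. -/
theorem stmt9 [Fintype X] (R : X → X → Prop) (hR : ProtoRanking R)
    (x y z : X) (hxy : x ≠ y) (hyz : y ≠ z) (hxz : x ≠ z)
    (h : ∀ a b : X, a ∈ ({x, y, z} : Set X) → b ∈ ({x, y, z} : Set X) →
      R a b → a = x ∧ b = z) :
    ∃ R' : X → X → Prop, Ranking R' ∧ (∀ a b : X, R a b → R' a b) ∧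
      R' x z ∧ R' z y ∧ OrdInterval R' x y = OrdInterval R x z ∪ {y} := by
  classical
  obtain ⟨hirr, htr⟩ := hR
  have hmx : x ∈ ({x, y, z} : Set X) := by simp
  have hmy : y ∈ ({x, y, z} : Set X) := by simp
  have hmz : z ∈ ({x, y, z} : Set X) := by simp
  have nRxy : ¬ R x y := fun hh => hyz ((h x y hmx hmy hh).2)
  have nRyx : ¬ R y x := fun hh => hxy ((h y x hmy hmx hh).1).symm
  have nRyz : ¬ R y z := fun hh => hxy ((h y z hmy hmz hh).1).symm
  have nRzy : ¬ R z y := fun hh => hxz ((h z y hmz hmy hh).1).symm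
  have nRzx : ¬ R z x := fun hh => hxz ((h z x hmz hmx hh).1).symm
  -- a linear extension of R for tie breaking
  letI : IsPartialOrder X (fun a b => R a b ∨ a = b) :=
    { refl := fun a => Or.inr rfl
      trans := by
        rintro a b c (h1 | rfl) (h2 | rfl)
        · exact Or.inl (htr _ _ _ h1 h2)
        · exact Or.inl h1
        · exact Or.inl h2
        · exact Or.inr rfl
      antisymm := by
        rintro a b (h1 | rfl) (h2 | h2)
        · exact absurd (htr _ _ _ h1 h2) (hirr a)
        · exact h2.symm
        · rfl
        · rfl }
  obtain ⟨s, hs, hrs⟩ := extend_partialOrder (fun a b : X => R a b ∨ a = b)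
  haveI := hs
  set L : X → X → Prop := fun a b => s a b ∧ a ≠ b with hL
  have hLirr : ∀ a, ¬ L a a := fun a ha => ha.2 rfl
  have hLtr : ∀ a b c, L a b → L b c → L a c := by
    rintro a b c ⟨h1, hne1⟩ ⟨h2, hne2⟩
    refine ⟨IsTrans.trans _ _ _ h1 h2, fun e => ?_⟩
    subst e
    exact hne1 (Std.Antisymm.antisymm _ _ h1 h2)
  have hLtot : ∀ a b, a ≠ b → L a b ∨ L b a := by
    intro a b hne
    rcases Std.Total.total (r := s) a b with h1 | h1
    · exact Or.inl ⟨h1, hne⟩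
    · exact Or.inr ⟨h1, hne.symm⟩
  have hRL : ∀ a b, R a b → L a b := by
    intro a b hab
    exact ⟨hrs a b (Or.inl hab), fun e => hirr a (e ▸ hab)⟩
  set cls : X → ℕ := cls9 R x y z with hcls
  -- monotonicity of cls along R
  have hmono : ∀ a b, R a b → cls a ≤ cls b := by
    intro a b hab
    rcases eq_or_ne x a with rfl | hax0
    · -- a = x
      rw [hcls, cls9_x]
      rcases eq_or_ne z b with rfl | hbz0
      · rw [cls9_z R hxz.symm hyz.symm]; omega
      have hbz : b ≠ z := hbz0.symm
      have hbx : b ≠ x := fun e => hirr x (e ▸ hab)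
      have hby : b ≠ y := fun e => nRxy (e ▸ hab)
      by_cases hM : R x b ∧ R b z
      · rw [cls9_mid R hbx hby hbz hM]; omega
      · rw [cls9_hi R hbx hby hbz hM (Or.inl hab)]; omega
    have hax : a ≠ x := hax0.symm
    rcases eq_or_ne y a with rfl | hay0
    · -- a = y
      rw [hcls, cls9_y R z hxy.symm]
      have hbx : b ≠ x := fun e => nRyx (e ▸ hab)
      have hby : b ≠ y := fun e => hirr y (e ▸ hab)
      have hbz : b ≠ z := fun e => nRyz (e ▸ hab)
      have hM : ¬ (R x b ∧ R b z) := fun hM => nRyz (htr _ _ _ hab hM.2)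
      rw [cls9_hi R hbx hby hbz hM (Or.inr (Or.inl hab))]; omega
    have hay : a ≠ y := hay0.symm
    rcases eq_or_ne z a with rfl | haz0
    · -- a = z
      rw [hcls, cls9_z R hxz.symm hyz.symm]
      have hbx : b ≠ x := fun e => nRzx (e ▸ hab)
      have hby : b ≠ y := fun e => nRzy (e ▸ hab)
      have hbz : b ≠ z := fun e => hirr z (e ▸ hab)
      have hM : ¬ (R x b ∧ R b z) := fun hM => hirr z (htr _ _ _ hab hM.2)
      rw [cls9_hi R hbx hby hbz hM (Or.inr (Or.inr hab))]; omega
    have haz : a ≠ z := haz0.symm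
    by_cases hMa : R x a ∧ R a z
    · -- a strictly between x and z
      rw [hcls, cls9_mid R hax hay haz hMa]
      rcases eq_or_ne x b with rfl | hbx0
      · exact absurd (htr _ _ _ hMa.1 hab) (hirr x)
      have hbx : b ≠ x := hbx0.symm
      rcases eq_or_ne y b with rfl | hby0
      · rw [cls9_y R z hxy.symm]; omega
      have hby : b ≠ y := hby0.symm
      rcases eq_or_ne z b with rfl | hbz0
      · rw [cls9_z R hxz.symm hyz.symm]; omega
      have hbz : b ≠ z := hbz0.symm
      by_cases hMb : R x b ∧ R b z
      · rw [cls9_mid R hbx hby hbz hMb]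
      · rw [cls9_hi R hbx hby hbz hMb (Or.inl (htr _ _ _ hMa.1 hab))]; omega
    by_cases hHa : R x a ∨ R y a ∨ R z a
    · -- a above
      rw [hcls, cls9_hi R hax hay haz hMa hHa]
      have haz2 : ¬ R a z := by
        intro haz2
        rcases hHa with h1 | h1 | h1
        · exact hMa ⟨h1, haz2⟩
        · exact nRyz (htr _ _ _ h1 haz2)
        · exact hirr z (htr _ _ _ h1 haz2)
      have hbx : b ≠ x := by
        rintro rfl
        rcases hHa with h1 | h1 | h1
        · exact hirr b (htr _ _ _ h1 hab)
        · exact nRyx (htr _ _ _ h1 hab)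
        · exact nRzx (htr _ _ _ h1 hab)
      have hby : b ≠ y := by
        rintro rfl
        rcases hHa with h1 | h1 | h1
        · exact nRxy (htr _ _ _ h1 hab)
        · exact hirr b (htr _ _ _ h1 hab)
        · exact nRzy (htr _ _ _ h1 hab)
      have hbz : b ≠ z := by rintro rfl; exact haz2 hab
      have hMb : ¬ (R x b ∧ R b z) := fun hMb => haz2 (htr _ _ _ hab hMb.2)
      have hHb : R x b ∨ R y b ∨ R z b := by
        rcases hHa with h1 | h1 | h1
        · exact Or.inl (htr _ _ _ h1 hab)
        · exact Or.inr (Or.inl (htr _ _ _ h1 hab))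
        · exact Or.inr (Or.inr (htr _ _ _ h1 hab))
      rw [cls9_hi R hbx hby hbz hMb hHb]
    · -- a below: cls a = 0
      have h0 : cls a = 0 := by
        rw [hcls]; unfold cls9; simp [hax, hay, haz, hMa, hHa]
      rw [h0]; exact Nat.zero_le _
  set R' : X → X → Prop := fun a b => cls a < cls b ∨ (cls a = cls b ∧ L a b) with hR'
  have hclx : cls x = 1 := cls9_x R x y z
  have hcly : cls y = 4 := cls9_y R z hxy.symm
  have hclz : cls z = 3 := cls9_z R hxz.symm hyz.symm
  refine ⟨R', ⟨?_, ?_, ?_⟩, ?_, ?_, ?_, ?_⟩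
  · -- irreflexive
    rintro a (ha | ⟨_, ha⟩)
    · exact lt_irrefl _ ha
    · exact hLirr a ha
  · -- transitive
    rintro a b c (h1 | ⟨h1, hl1⟩) (h2 | ⟨h2, hl2⟩)
    · exact Or.inl (h1.trans h2)
    · exact Or.inl (h2 ▸ h1)
    · exact Or.inl (h1 ▸ h2)
    · exact Or.inr ⟨h1.trans h2, hLtr _ _ _ hl1 hl2⟩
  · -- total
    intro a b hne
    rcases Nat.lt_trichotomy (cls a) (cls b) with h1 | h1 | h1
    · exact Or.inl (Or.inl h1)
    · rcases hLtot a b hne with h2 | h2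
      · exact Or.inl (Or.inr ⟨h1, h2⟩)
      · exact Or.inr (Or.inr ⟨h1.symm, h2⟩)
    · exact Or.inr (Or.inl h1)
  · -- extends R
    intro a b hab
    rcases lt_or_eq_of_le (hmono a b hab) with h1 | h1
    · exact Or.inl h1
    · exact Or.inr ⟨h1, hRL a b hab⟩
  · exact Or.inl (by rw [hclx, hclz]; omega)
  · exact Or.inl (by rw [hclz, hcly]; omega)
  · -- the interval equality
    have hbet : ∀ c, (R' x c ∧ R' c y) ↔ (c = z ∨ (R x c ∧ R c z)) := by
      intro c
      constructor
      · rintro ⟨h1, h2⟩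
        have hlt1 : 1 < cls c := by
          rcases h1 with h1 | ⟨h1, hl1⟩
          · rwa [hclx] at h1
          · rw [hclx] at h1
            exact absurd hl1 (by rw [cls9_eq_one h1.symm]; exact hLirr x)
        have hlt2 : cls c < 4 := by
          rcases h2 with h2 | ⟨h2, hl2⟩
          · rwa [hcly] at h2
          · rw [hcly] at h2
            exact absurd hl2 (by rw [cls9_eq_four h2]; exact hLirr y)
        have : cls c = 2 ∨ cls c = 3 := by omega
        rcases this with hc | hc
        · exact Or.inr (cls9_eq_two hc)
        · exact Or.inl (cls9_eq_three hc)
      · rintro (rfl | hM)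
        · exact ⟨Or.inl (by rw [hclx, hclz]; omega), Or.inl (by rw [hclz, hcly]; omega)⟩
        · have hcx : c ≠ x := fun e => hirr x (e ▸ hM.1)
          have hcy : c ≠ y := fun e => nRxy (e ▸ hM.1)
          have hcz : c ≠ z := fun e => hirr z (e ▸ hM.2)
          have hc2 : cls c = 2 := cls9_mid R hcx hcy hcz hM
          exact ⟨Or.inl (by rw [hclx, hc2]; omega), Or.inl (by rw [hc2, hcly]; omega)⟩
    ext c
    simp only [OrdInterval, Set.mem_setOf_eq, Set.union_singleton, Set.mem_insert_iff]
    rw [hbet c]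
    tauto
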